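/- For p = q, the set S = {z ∈ ℂ^{q×q} : z*z = 1} equals {z ∈ closure(D) : |det z| = 1}, where D = {z : 1 − z*z positive definite}; consequently for every a in closure(D) \ S the function z ↦ 1/(det z − det a) is holomorphic in a neighbourhood of S, so the rational convex hull of S = U(q) in ℂ^{q×q} is S itself. -/

import Mathlib

open Matrix
open scoped ComplexOrder

/-- Evaluation of a polynomial in the matrix entries. -/
noncomputable def matPolyEval {q : ℕ} (P : MvPolynomial (Fin q × Fin q) ℂ)
    (z : Matrix (Fin q) (Fin q) ℂ) : ℂ :=
  MvPolynomial.eval (fun ij => z ij.1 ij.2) P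

/-- The rational convex hull of a compact `K ⊂ ℂ^{q×q}`: the set of `z` such that every
rational function holomorphic on `K` (quotient `P/Q` of polynomials with `Q` nonvanishing
on `K`) is holomorphic at `z` (i.e. `Q z ≠ 0`) and satisfies `|f(z)| ≤ sup_K |f|`. -/
def ratHull {q : ℕ} (K : Set (Matrix (Fin q) (Fin q) ℂ)) : Set (Matrix (Fin q) (Fin q) ℂ) :=
  {z | ∀ P Q : MvPolynomial (Fin q × Fin q) ℂ,
    (∀ w ∈ K, matPolyEval Q w ≠ 0) →
      matPolyEval Q z ≠ 0 ∧
      ∀ c : ℝ, (∀ w ∈ K, ‖matPolyEval P w / matPolyEval Q w‖ ≤ c) →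
        ‖matPolyEval P z / matPolyEval Q z‖ ≤ c}

section Aux

variable {q : ℕ}

lemma herm_one_sub (z : Matrix (Fin q) (Fin q) ℂ) : (1 - zᴴ * z).IsHermitian :=
  Matrix.isHermitian_one.sub (Matrix.isHermitian_conjTranspose_mul_self z)

lemma isClosedNonnegC : IsClosed {c : ℂ | 0 ≤ c} := by
  have : {c : ℂ | 0 ≤ c} = {c : ℂ | (0:ℝ) ≤ c.re} ∩ {c : ℂ | c.im = 0} := by
    ext c
    simp [Complex.le_def, eq_comm]
  rw [this]
  exact (isClosed_le continuous_const Complex.continuous_re).inter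
    (isClosed_eq Complex.continuous_im continuous_const)

lemma isClosed_C : IsClosed {z : Matrix (Fin q) (Fin q) ℂ | (1 - zᴴ * z).PosSemidef} := by
  have h : {z : Matrix (Fin q) (Fin q) ℂ | (1 - zᴴ * z).PosSemidef}
      = ⋂ x : Fin q → ℂ, (fun z : Matrix (Fin q) (Fin q) ℂ =>
          star x ⬝ᵥ (1 - zᴴ * z) *ᵥ x) ⁻¹' {c | 0 ≤ c} := by
    ext z
    simp only [Set.mem_setOf_eq, Set.mem_iInter, Set.mem_preimage]
    exact ⟨fun h x => h.dotProduct_mulVec_nonneg x, fun h => PosSemidef.of_dotProduct_mulVec_nonneg (herm_one_sub z) h⟩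
  rw [h]
  refine isClosed_iInter fun x => IsClosed.preimage ?_ isClosedNonnegC
  exact continuous_const.dotProduct
    (((continuous_const.sub ((continuous_id.matrix_conjTranspose).matrix_mul
      continuous_id)).matrix_mulVec continuous_const))

lemma smul_mem_D {z : Matrix (Fin q) (Fin q) ℂ} (hz : (1 - zᴴ * z).PosSemidef)
    {r : ℝ} (h0 : 0 ≤ r) (h1 : r < 1) :
    (1 - ((r:ℂ) • z)ᴴ * ((r:ℂ) • z)).PosDef := by
  have hstar : star ((r:ℂ)) = (r:ℂ) := Complex.conj_ofReal r
  have key : 1 - ((r:ℂ) • z)ᴴ * ((r:ℂ) • z)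
      = (((1 - r^2 : ℝ)) : ℂ) • (1 : Matrix (Fin q) (Fin q) ℂ)
        + (((r^2 : ℝ)) : ℂ) • (1 - zᴴ * z) := by
    rw [conjTranspose_smul, hstar, smul_mul_smul_comm, smul_sub]
    push_cast
    rw [sub_smul, one_smul, sq]
    abel
  rw [key]
  refine Matrix.PosDef.add_posSemidef ?_ ?_
  · rw [Matrix.smul_one_eq_diagonal]
    rw [Matrix.posDef_diagonal_iff]
    intro i
    rw [Complex.zero_lt_real]
    nlinarith
  · refine PosSemidef.of_dotProduct_mulVec_nonneg ?_ fun x => ?_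
    · have hstar2 : star (((r^2 : ℝ)) : ℂ) = (((r^2 : ℝ)) : ℂ) := Complex.conj_ofReal _
      rw [IsHermitian, conjTranspose_smul, hstar2, hz.1.eq]
    · rw [smul_mulVec, dotProduct_smul, smul_eq_mul]
      exact mul_nonneg (Complex.zero_le_real.mpr (sq_nonneg r)) (hz.dotProduct_mulVec_nonneg x)

lemma closure_D_eq :
    closure {z : Matrix (Fin q) (Fin q) ℂ | (1 - zᴴ * z).PosDef}
      = {z : Matrix (Fin q) (Fin q) ℂ | (1 - zᴴ * z).PosSemidef} := by
  apply Set.Subset.antisymm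
  · exact closure_minimal (fun z hz => hz.posSemidef) isClosed_C
  · intro z hz
    have hc : Filter.Tendsto (fun n : ℕ => (1 - 1/((n:ℝ)+1))) Filter.atTop (nhds 1) := by
      have := tendsto_one_div_add_atTop_nhds_zero_nat (𝕜 := ℝ)
      have h2 := (tendsto_const_nhds (α := ℕ) (f := Filter.atTop) (x := (1:ℝ))).sub this
      simpa using h2
    have ht : Filter.Tendsto (fun n : ℕ => ((((1 - 1/((n:ℝ)+1)) : ℝ)) : ℂ) • z)
        Filter.atTop (nhds z) := by
      have : Filter.Tendsto (fun n : ℕ => (((1 - 1/((n:ℝ)+1)) : ℝ) : ℂ))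
          Filter.atTop (nhds ((1:ℝ) : ℂ)) :=
        (Complex.continuous_ofReal.tendsto _).comp hc
      simpa using this.smul_const z
    refine mem_closure_of_tendsto ht ?_
    · refine Filter.Eventually.of_forall fun n => ?_
      refine smul_mem_D hz ?_ ?_
      · have h1 : 1/((n:ℝ)+1) ≤ 1 := by
          rw [div_le_one (by positivity)]; linarith
        linarith
      · have : 0 < 1/((n:ℝ)+1) := by positivity
        linarith

lemma eig_le_one {A : Matrix (Fin q) (Fin q) ℂ} (hA : A.IsHermitian)
    (h1 : (1 - A).PosSemidef) (i : Fin q) : hA.eigenvalues i ≤ 1 := by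
  have h0 := h1.re_dotProduct_nonneg (⇑(hA.eigenvectorBasis i))
  have hnorm : star (⇑(hA.eigenvectorBasis i)) ⬝ᵥ (⇑(hA.eigenvectorBasis i)) = 1 := by
    have h2 := (EuclideanSpace.inner_eq_star_dotProduct (hA.eigenvectorBasis i)
      (hA.eigenvectorBasis i)).symm
    rw [inner_self_eq_norm_sq_to_K, hA.eigenvectorBasis.orthonormal.1 i] at h2
    rw [dotProduct_comm]
    simpa using h2
  rw [sub_mulVec, one_mulVec, dotProduct_sub, hnorm, map_sub, RCLike.one_re,
    ← hA.eigenvalues_eq i] at h0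
  linarith

lemma psd_sandwich {A : Matrix (Fin q) (Fin q) ℂ} (hA : A.PosSemidef)
    (h1 : (1 - A).PosSemidef) :
    ‖A.det‖ ≤ 1 ∧ (A.det = 1 → A = 1) := by
  have hle := fun i => eig_le_one hA.1 h1 i
  have hge := fun i => hA.eigenvalues_nonneg i
  have hdet : A.det = ((∏ i, hA.1.eigenvalues i : ℝ) : ℂ) := by
    rw [hA.1.det_eq_prod_eigenvalues]; push_cast; rfl
  have hprodle : ∏ i, hA.1.eigenvalues i ≤ 1 :=
    Finset.prod_le_one (fun i _ => hge i) (fun i _ => hle i)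
  have hprodge : (0:ℝ) ≤ ∏ i, hA.1.eigenvalues i := Finset.prod_nonneg fun i _ => hge i
  constructor
  · rw [hdet]
    rw [Complex.norm_real, Real.norm_eq_abs, abs_of_nonneg hprodge]
    exact hprodle
  · intro hd
    have hprod : ∏ i, hA.1.eigenvalues i = 1 := by
      rw [hdet] at hd
      exact_mod_cast hd
    have hall : ∀ i, hA.1.eigenvalues i = 1 := by
      intro i
      refine le_antisymm (hle i) ?_
      have hrest : ∏ j ∈ Finset.univ.erase i, hA.1.eigenvalues j ≤ 1 :=
        Finset.prod_le_one (fun j _ => hge j) (fun j _ => hle j)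
      have hsplit : hA.1.eigenvalues i * ∏ j ∈ Finset.univ.erase i, hA.1.eigenvalues j = 1 :=
        (Finset.mul_prod_erase Finset.univ _ (Finset.mem_univ i)).trans hprod
      nlinarith [hge i]
    have hdiag : (RCLike.ofReal ∘ hA.1.eigenvalues : Fin q → ℂ) = fun _ => 1 := by
      funext i
      simp [hall i]
    have hu : (Matrix.IsHermitian.eigenvectorUnitary hA.1 : Matrix (Fin q) (Fin q) ℂ)
        * star (Matrix.IsHermitian.eigenvectorUnitary hA.1 : Matrix (Fin q) (Fin q) ℂ) = 1 :=
      Matrix.mem_unitaryGroup_iff.mp (Matrix.IsHermitian.eigenvectorUnitary hA.1).2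
    rw [hA.1.spectral_theorem, hdiag, Matrix.diagonal_one, map_one]

lemma abs_det_eq_one {z : Matrix (Fin q) (Fin q) ℂ} (hz : zᴴ * z = 1) :
    ‖z.det‖ = 1 := by
  have h : star z.det * z.det = 1 := by
    rw [← Matrix.det_conjTranspose, ← Matrix.det_mul, hz, Matrix.det_one]
  rw [Complex.star_def] at h
  have hsq : Complex.normSq z.det = 1 := by
    have h2 : ((Complex.normSq z.det : ℝ) : ℂ) = 1 := by
      rw [Complex.normSq_eq_conj_mul_self, h]
    exact_mod_cast h2
  rw [Complex.norm_def, hsq, Real.sqrt_one]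

lemma det_herm_eq {z : Matrix (Fin q) (Fin q) ℂ} :
    (zᴴ * z).det = ((‖z.det‖ ^ 2 : ℝ) : ℂ) := by
  rw [Matrix.det_mul, Matrix.det_conjTranspose, Complex.star_def,
    ← Complex.normSq_eq_conj_mul_self, Complex.normSq_eq_norm_sq]

noncomputable def detPoly (q : ℕ) : MvPolynomial (Fin q × Fin q) ℂ :=
  ∑ σ : Equiv.Perm (Fin q), (Equiv.Perm.sign σ : ℤ) •
    ∏ i : Fin q, MvPolynomial.X (σ i, i)

lemma matPolyEval_detPoly (z : Matrix (Fin q) (Fin q) ℂ) :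
    matPolyEval (detPoly q) z = z.det := by
  rw [matPolyEval, detPoly, Matrix.det_apply, map_sum]
  refine Finset.sum_congr rfl fun σ _ => ?_
  rw [map_zsmul, map_prod]
  simp [Units.smul_def]

noncomputable def linPoly (v x : Fin q → ℂ) : MvPolynomial (Fin q × Fin q) ℂ :=
  ∑ i : Fin q, ∑ j : Fin q,
    MvPolynomial.C (star (v i) * x j) * MvPolynomial.X (i, j)

lemma matPolyEval_linPoly (v x : Fin q → ℂ) (w : Matrix (Fin q) (Fin q) ℂ) :
    matPolyEval (linPoly v x) w = star v ⬝ᵥ (w *ᵥ x) := by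
  simp only [matPolyEval, linPoly, map_sum, _root_.map_mul, MvPolynomial.eval_C,
    MvPolynomial.eval_X, dotProduct, mulVec, Pi.star_apply, Finset.mul_sum]
  refine Finset.sum_congr rfl fun i _ => Finset.sum_congr rfl fun j _ => by ring

lemma matPolyEval_sub (P Q : MvPolynomial (Fin q × Fin q) ℂ)
    (z : Matrix (Fin q) (Fin q) ℂ) :
    matPolyEval (P - Q) z = matPolyEval P z - matPolyEval Q z :=
  map_sub _ _ _

lemma matPolyEval_C (c : ℂ) (z : Matrix (Fin q) (Fin q) ℂ) :
    matPolyEval (MvPolynomial.C c) z = c :=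
  MvPolynomial.eval_C _

lemma matPolyEval_one (z : Matrix (Fin q) (Fin q) ℂ) :
    matPolyEval (1 : MvPolynomial (Fin q × Fin q) ℂ) z = 1 :=
  map_one _

lemma cs_aux (v u : Fin q → ℂ) :
    ‖star v ⬝ᵥ u‖ ≤ Real.sqrt (∑ i, ‖v i‖^2) * Real.sqrt (∑ i, ‖u i‖^2) := by
  have h := norm_inner_le_norm (𝕜 := ℂ)
    ((WithLp.equiv 2 (Fin q → ℂ)).symm v) ((WithLp.equiv 2 (Fin q → ℂ)).symm u)
  rw [EuclideanSpace.inner_eq_star_dotProduct] at h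
  rw [dotProduct_comm]
  simpa [EuclideanSpace.norm_eq] using h

lemma dot_star_self (x : Fin q → ℂ) :
    star x ⬝ᵥ x = ((∑ i, ‖x i‖^2 : ℝ) : ℂ) := by
  simp only [dotProduct, Pi.star_apply]
  push_cast
  refine Finset.sum_congr rfl fun i _ => ?_
  rw [Complex.star_def, ← Complex.normSq_eq_conj_mul_self, Complex.normSq_eq_norm_sq]
  push_cast
  ring

lemma quad_form (z : Matrix (Fin q) (Fin q) ℂ) (x : Fin q → ℂ) :
    star x ⬝ᵥ (1 - zᴴ * z) *ᵥ x
      = ((∑ i, ‖x i‖^2 : ℝ) : ℂ) - ((∑ i, ‖(z *ᵥ x) i‖^2 : ℝ) : ℂ) := by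
  rw [sub_mulVec, one_mulVec, dotProduct_sub, dot_star_self]
  congr 1
  rw [← Matrix.mulVec_mulVec, Matrix.dotProduct_mulVec, ← Matrix.star_mulVec,
    dot_star_self]

lemma dot_unitary {w : Matrix (Fin q) (Fin q) ℂ} (hw : wᴴ * w = 1) (x : Fin q → ℂ) :
    (∑ i, ‖(w *ᵥ x) i‖^2) = ∑ i, ‖x i‖^2 := by
  have h : star (w *ᵥ x) ⬝ᵥ (w *ᵥ x) = star x ⬝ᵥ x := by
    rw [Matrix.star_mulVec, Matrix.dotProduct_mulVec, Matrix.vecMul_vecMul, hw,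
      Matrix.vecMul_one]
  rw [dot_star_self, dot_star_self] at h
  exact_mod_cast h

end Aux

/-- For `p = q`, the set `S = {z ∈ ℂ^{q×q} : z*z = 1}` equals
`{z ∈ closure(D) : |det z| = 1}` where `D = {z : 1 − z*z positive definite}`, and the
rational convex hull of `S = U(q)` in `ℂ^{q×q}` is `S` itself. -/
theorem stmt_13 (q : ℕ) (hq : 1 ≤ q)
    (D S : Set (Matrix (Fin q) (Fin q) ℂ))
    (hD : D = {z | (1 - zᴴ * z).PosDef})
    (hS : S = {z | zᴴ * z = 1}) :
    S = {z ∈ closure D | ‖z.det‖ = 1} ∧ ratHull S = S := by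
  subst hD hS
  constructor
  · ext z
    constructor
    · intro hz
      refine ⟨?_, abs_det_eq_one hz⟩
      rw [closure_D_eq]
      have hz' : zᴴ * z = 1 := hz
      show (1 - zᴴ * z).PosSemidef
      rw [hz', sub_self]
      exact Matrix.PosSemidef.zero
    · rintro ⟨hcl, habs⟩
      rw [closure_D_eq] at hcl
      have hA : (zᴴ * z).PosSemidef := Matrix.posSemidef_conjTranspose_mul_self z
      refine (psd_sandwich hA hcl).2 ?_
      rw [det_herm_eq, habs]
      norm_num
  · apply Set.Subset.antisymm
    · intro z hz
      by_cases hC : (1 - zᴴ * z).PosSemidef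
      · -- inside the closed domain: use the determinant rational function
        by_contra hzS
        have hA : (zᴴ * z).PosSemidef := Matrix.posSemidef_conjTranspose_mul_self z
        have hsand := psd_sandwich hA hC
        have habs_le : ‖z.det‖ ≤ 1 := by
          have h1 := hsand.1
          rw [det_herm_eq, Complex.norm_real, Real.norm_eq_abs, abs_of_nonneg (by positivity)] at h1
          nlinarith [norm_nonneg z.det]
        have hne : ‖z.det‖ ≠ 1 := by
          intro h
          apply hzS
          refine hsand.2 ?_
          rw [det_herm_eq, h]
          norm_num
        have hlt : ‖z.det‖ < 1 := lt_of_le_of_ne habs_le hne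
        have hQ : ∀ w ∈ {z : Matrix (Fin q) (Fin q) ℂ | zᴴ * z = 1},
            matPolyEval (detPoly q - MvPolynomial.C z.det) w ≠ 0 := by
          intro w hw h0
          rw [matPolyEval_sub, matPolyEval_detPoly, matPolyEval_C, sub_eq_zero] at h0
          have : ‖w.det‖ = 1 := abs_det_eq_one hw
          rw [h0] at this
          exact absurd this hlt.ne
        have h1 := (hz 0 (detPoly q - MvPolynomial.C z.det) hQ).1
        apply h1
        rw [matPolyEval_sub, matPolyEval_detPoly, matPolyEval_C, sub_self]
      · -- outside the closed domain: use a linear functional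
        exfalso
        have hax : ¬ ∀ x : Fin q → ℂ, 0 ≤ star x ⬝ᵥ (1 - zᴴ * z) *ᵥ x :=
          fun h => hC (PosSemidef.of_dotProduct_mulVec_nonneg (herm_one_sub z) h)
        push_neg at hax
        obtain ⟨x, hx⟩ := hax
        rw [quad_form, ← Complex.ofReal_sub] at hx
        rw [Complex.zero_le_real, not_le, sub_neg] at hx
        set v := z *ᵥ x with hv
        set nx : ℝ := ∑ i, ‖x i‖^2 with hnx
        set nv : ℝ := ∑ i, ‖v i‖^2 with hnv
        have hx0 : (0:ℝ) ≤ nx := Finset.sum_nonneg fun i _ => by positivity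
        have hnv0 : (0:ℝ) ≤ nv := Finset.sum_nonneg fun i _ => by positivity
        have hQ : ∀ w ∈ {z : Matrix (Fin q) (Fin q) ℂ | zᴴ * z = 1},
            matPolyEval (1 : MvPolynomial (Fin q × Fin q) ℂ) w ≠ 0 := by
          intro w _
          rw [matPolyEval_one]
          exact one_ne_zero
        have hbound : ∀ w ∈ {z : Matrix (Fin q) (Fin q) ℂ | zᴴ * z = 1},
            ‖matPolyEval (linPoly v x) w / matPolyEval 1 w‖
              ≤ Real.sqrt nv * Real.sqrt nx := by
          intro w hw
          rw [matPolyEval_one, div_one, matPolyEval_linPoly]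
          have := cs_aux v (w *ᵥ x)
          rwa [dot_unitary hw x] at this
        have h2 := (hz (linPoly v x) 1 hQ).2 (Real.sqrt nv * Real.sqrt nx) hbound
        rw [matPolyEval_one, div_one, matPolyEval_linPoly, ← hv, dot_star_self,
          ← hnv] at h2
        rw [Complex.norm_real, Real.norm_eq_abs, abs_of_nonneg hnv0] at h2
        have s1 : Real.sqrt nx < Real.sqrt nv := Real.sqrt_lt_sqrt hx0 hx
        have s2 : (0:ℝ) < Real.sqrt nv := lt_of_le_of_lt (Real.sqrt_nonneg nx) s1
        have s3 : Real.sqrt nv * Real.sqrt nx < Real.sqrt nv * Real.sqrt nv :=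
          mul_lt_mul_of_pos_left s1 s2
        rw [Real.mul_self_sqrt hnv0] at s3
        linarith
    · intro z hz P Q hQ
      exact ⟨hQ z hz, fun c hc => hc z hz⟩
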